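/- Let r ≥ 1 be an integer. Let R be a discrete valuation ring containing ℂ, with maximal ideal 𝔪, residue field k = R/𝔪 and fraction field K. Let V_R be a finite free R-module, let B₁, B₂ be R-linear endomorphisms of V_R, and let I : R^r → V_R and J : V_R → R^r be R-linear maps satisfying [B₁,B₂] + I∘J = 0. Assume that the reduction modulo 𝔪, namely (V_R ⊗_R k, B₁ ⊗ k, B₂ ⊗ k, I ⊗ k, J ⊗ k), is stable framed ADHM data over k. If B₃ is a K-linear endomorphism of V_K = K ⊗_R V_R that commutes with the base changes B₁ ⊗ K and B₂ ⊗ K and satisfies B₃ ∘ (I ⊗ K) = (I ⊗ K) ∘ A_r (with A_r taken over K), then there exists an R-linear endomorphism B₃′ of V_R whose base change to K equals B₃. -/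

import Mathlib

open LinearMap TensorProduct

/-- The regular nilpotent endomorphism `A_r` of `R^r`, sending the standard basis vector
`e_a` to `e_{a+1}` (and the last one to `0`). -/
noncomputable def Ar (R : Type*) [CommRing R] (r : ℕ) : (Fin r → R) →ₗ[R] (Fin r → R) where
  toFun v i := if h : (i : ℕ) = 0 then 0
    else v ⟨(i : ℕ) - 1, lt_of_le_of_lt (Nat.sub_le _ _) i.isLt⟩
  map_add' u v := by funext i; by_cases h : (i : ℕ) = 0 <;> simp [h]
  map_smul' c v := by funext i; by_cases h : (i : ℕ) = 0 <;> simp [h]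

/-- If the reduction mod the maximal ideal is stable, then any `B₁,B₂`-invariant
`R`-submodule of `V` containing the range of `I` is all of `V` (by Nakayama). -/
theorem adhm_gen_aux (r : ℕ)
    (R : Type*) [CommRing R] [IsDomain R] [IsDiscreteValuationRing R]
    (V : Type*) [AddCommGroup V] [Module R V] [Module.Finite R V] [Module.Free R V]
    (B₁ B₂ : V →ₗ[R] V) (I : (Fin r → R) →ₗ[R] V)
    (hstable : ∀ W : Submodule (IsLocalRing.ResidueField R)
        (IsLocalRing.ResidueField R ⊗[R] V),
        (∀ v ∈ W, B₁.baseChange (IsLocalRing.ResidueField R) v ∈ W) →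
        (∀ v ∈ W, B₂.baseChange (IsLocalRing.ResidueField R) v ∈ W) →
        (∀ x, I.baseChange (IsLocalRing.ResidueField R) x ∈ W) → W = ⊤)
    (W : Submodule R V)
    (h1 : ∀ v ∈ W, B₁ v ∈ W) (h2 : ∀ v ∈ W, B₂ v ∈ W)
    (hI : range I ≤ W) : W = ⊤ := by
  set k := IsLocalRing.ResidueField R
  set φ : V →ₗ[R] k ⊗[R] V := (TensorProduct.mk R k V) 1 with hφ
  -- the k-span of the image of W
  set Wb : Submodule k (k ⊗[R] V) := Submodule.span k (φ '' W) with hWb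
  have hWbtop : Wb = ⊤ := by
    apply hstable
    · intro v hv
      induction hv using Submodule.span_induction with
      | mem x hx =>
        obtain ⟨w, hw, rfl⟩ := hx
        exact Submodule.subset_span ⟨B₁ w, h1 w hw, rfl⟩
      | zero => simp
      | add x y _ _ hx hy => rw [map_add]; exact Wb.add_mem hx hy
      | smul c x _ hx => rw [map_smul]; exact Wb.smul_mem c hx
    · intro v hv
      induction hv using Submodule.span_induction with
      | mem x hx =>
        obtain ⟨w, hw, rfl⟩ := hx
        exact Submodule.subset_span ⟨B₂ w, h2 w hw, rfl⟩
      | zero => simp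
      | add x y _ _ hx hy => rw [map_add]; exact Wb.add_mem hx hy
      | smul c x _ hx => rw [map_smul]; exact Wb.smul_mem c hx
    · intro x
      induction x using TensorProduct.induction_on with
      | zero => simp
      | tmul c y =>
        have : I.baseChange k (c ⊗ₜ y) = c • φ (I y) := by
          simp [hφ, TensorProduct.smul_tmul']
        rw [this]
        exact Wb.smul_mem c (Submodule.subset_span ⟨I y, hI ⟨y, rfl⟩, rfl⟩)
      | add x y hx hy => rw [map_add]; exact Wb.add_mem hx hy
  -- every element of Wb lifts to W
  have hlift : ∀ z ∈ Wb, ∃ w ∈ W, φ w = z := by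
    intro z hz
    induction hz using Submodule.span_induction with
    | mem x hx => obtain ⟨w, hw, rfl⟩ := hx; exact ⟨w, hw, rfl⟩
    | zero => exact ⟨0, W.zero_mem, map_zero φ⟩
    | add x y _ _ hx hy =>
      obtain ⟨w, hw, rfl⟩ := hx; obtain ⟨w', hw', rfl⟩ := hy
      exact ⟨w + w', W.add_mem hw hw', map_add φ w w'⟩
    | smul c x _ hx =>
      obtain ⟨w, hw, rfl⟩ := hx
      obtain ⟨a, rfl⟩ := IsLocalRing.residue_surjective c
      refine ⟨a • w, W.smul_mem a hw, ?_⟩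
      simp only [hφ, TensorProduct.mk_apply]
      rw [TensorProduct.tmul_smul]
      exact (algebraMap_smul k a _).symm
  -- kernel of φ is contained in 𝔪 • ⊤
  have hker : ∀ v : V, φ v = 0 → v ∈ (IsLocalRing.maximalIdeal R) • (⊤ : Submodule R V) := by
    intro v hv
    have := congrArg (TensorProduct.quotTensorEquivQuotSMul V (IsLocalRing.maximalIdeal R)) hv
    replace this := this.trans (map_zero _)
    have h2 : (TensorProduct.quotTensorEquivQuotSMul V (IsLocalRing.maximalIdeal R)) (φ v)
        = Submodule.Quotient.mk v := by
      have := TensorProduct.quotTensorEquivQuotSMul_mk_tmul (M := V)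
        (IsLocalRing.maximalIdeal R) 1 v
      exact this.trans (by simp)
    rw [h2] at this
    exact (Submodule.Quotient.mk_eq_zero _).mp this
  -- Nakayama
  have htop : (⊤ : Submodule R V) ≤ W ⊔ (IsLocalRing.maximalIdeal R) • (⊤ : Submodule R V) := by
    intro v _
    obtain ⟨w, hw, hwv⟩ := hlift (φ v) (by rw [hWbtop]; trivial)
    have : φ (v - w) = 0 := by rw [map_sub, hwv, sub_self]
    have hm := hker _ this
    have : v = w + (v - w) := by abel
    rw [this]
    exact Submodule.add_mem _ (Submodule.mem_sup_left hw) (Submodule.mem_sup_right hm)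
  refine top_unique (Submodule.le_of_le_smul_of_le_jacobson_bot (Module.Finite.fg_top) ?_ htop)
  exact IsLocalRing.maximalIdeal_le_jacobson ⊥


/-- Let `R` be a discrete valuation ring containing `ℂ`, with residue field
`k` and fraction field `K`. Let `(V_R, B₁, B₂, I, J)` be framed ADHM data over `R` (with
`V_R` finite free) whose reduction modulo the maximal ideal is stable. Then any `K`-linear
endomorphism `B₃` of `V_K = K ⊗ V_R` commuting with `B₁ ⊗ K`, `B₂ ⊗ K` and satisfying
`B₃ ∘ (I ⊗ K) = (I ⊗ K) ∘ A_r` descends to an `R`-linear endomorphism of `V_R`. -/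
theorem stmt2 (r : ℕ) (hr : 1 ≤ r)
    (R : Type*) [CommRing R] [IsDomain R] [IsDiscreteValuationRing R] [Algebra ℂ R]
    (V : Type*) [AddCommGroup V] [Module R V] [Module.Finite R V] [Module.Free R V]
    (B₁ B₂ : V →ₗ[R] V) (I : (Fin r → R) →ₗ[R] V) (J : V →ₗ[R] (Fin r → R))
    (hADHM : B₁ ∘ₗ B₂ - B₂ ∘ₗ B₁ + I ∘ₗ J = 0)
    (hstable : ∀ W : Submodule (IsLocalRing.ResidueField R)
        (IsLocalRing.ResidueField R ⊗[R] V),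
        (∀ v ∈ W, B₁.baseChange (IsLocalRing.ResidueField R) v ∈ W) →
        (∀ v ∈ W, B₂.baseChange (IsLocalRing.ResidueField R) v ∈ W) →
        (∀ x, I.baseChange (IsLocalRing.ResidueField R) x ∈ W) → W = ⊤)
    (K : Type*) [Field K] [Algebra R K] [IsFractionRing R K]
    (B₃ : K ⊗[R] V →ₗ[K] K ⊗[R] V)
    (h31 : B₃ ∘ₗ B₁.baseChange K = B₁.baseChange K ∘ₗ B₃)
    (h32 : B₃ ∘ₗ B₂.baseChange K = B₂.baseChange K ∘ₗ B₃)
    (h3I : B₃ ∘ₗ I.baseChange K = I.baseChange K ∘ₗ (Ar R r).baseChange K) :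
    ∃ B₃' : V →ₗ[R] V, B₃'.baseChange K = B₃ := by
  set φ : V →ₗ[R] K ⊗[R] V := (TensorProduct.mk R K V) 1 with hφ
  have hinj : Function.Injective φ := by
    have h1 : Function.Injective ((Algebra.linearMap R K).rTensor V) :=
      Module.Flat.rTensor_preserves_injective_linearMap _ (IsFractionRing.injective R K)
    have heq : ⇑φ = ((Algebra.linearMap R K).rTensor V) ∘ (TensorProduct.lid R V).symm := by
      funext v; simp [hφ]
    rw [heq]
    exact h1.comp (TensorProduct.lid R V).symm.injective
  set W : Submodule R V :=
    Submodule.comap ((B₃.restrictScalars R) ∘ₗ φ) (LinearMap.range (φ)) with hW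
  have hmem : ∀ v : V, v ∈ W ↔ ∃ u : V, φ u = B₃ (φ v) := by
    intro v; rfl
  have hWtop : W = ⊤ := by
    apply adhm_gen_aux r R V B₁ B₂ I hstable
    · intro v hv
      obtain ⟨u, hu⟩ := (hmem v).mp hv
      refine (hmem (B₁ v)).mpr ⟨B₁ u, ?_⟩
      have hv1 : φ (B₁ v) = B₁.baseChange K (φ v) := by simp [hφ]
      have hu1 : φ (B₁ u) = B₁.baseChange K (φ u) := by simp [hφ]
      rw [hv1, hu1, hu]
      exact (LinearMap.congr_fun h31.symm (φ v))
    · intro v hv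
      obtain ⟨u, hu⟩ := (hmem v).mp hv
      refine (hmem (B₂ v)).mpr ⟨B₂ u, ?_⟩
      have hv1 : φ (B₂ v) = B₂.baseChange K (φ v) := by simp [hφ]
      have hu1 : φ (B₂ u) = B₂.baseChange K (φ u) := by simp [hφ]
      rw [hv1, hu1, hu]
      exact (LinearMap.congr_fun h32.symm (φ v))
    · rintro _ ⟨x, rfl⟩
      refine (hmem (I x)).mpr ⟨I ((Ar R r) x), ?_⟩
      have h1 : φ (I x) = I.baseChange K (1 ⊗ₜ x) := by simp [hφ]
      have h2 : φ (I ((Ar R r) x)) = I.baseChange K ((Ar R r).baseChange K (1 ⊗ₜ x)) := by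
        simp [hφ]
      rw [h1, h2]
      exact (LinearMap.congr_fun h3I (1 ⊗ₜ x)).symm
  have hrange : ∀ v : V, B₃ (φ v) ∈ LinearMap.range φ := by
    intro v
    obtain ⟨u, hu⟩ := (hmem v).mp (hWtop ▸ Submodule.mem_top : v ∈ W)
    exact ⟨u, hu⟩
  set g : V →ₗ[R] LinearMap.range φ :=
    LinearMap.codRestrict (LinearMap.range φ) ((B₃.restrictScalars R) ∘ₗ φ) hrange with hg
  set e : V ≃ₗ[R] LinearMap.range φ := LinearEquiv.ofInjective φ hinj with he
  refine ⟨e.symm.toLinearMap ∘ₗ g, ?_⟩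
  have key : ∀ v : V, φ ((e.symm.toLinearMap ∘ₗ g) v) = B₃ (φ v) := by
    intro v
    have h1 : e ((e.symm.toLinearMap ∘ₗ g) v) = g v := by
      simp
    have h2 : (e ((e.symm.toLinearMap ∘ₗ g) v) : K ⊗[R] V)
        = φ ((e.symm.toLinearMap ∘ₗ g) v) := rfl
    rw [h1] at h2
    exact h2.symm
  apply LinearMap.ext
  intro x
  induction x using TensorProduct.induction_on with
  | zero => simp
  | tmul c v =>
    have h1 : (c ⊗ₜ[R] v : K ⊗[R] V) = c • φ v := by
      simp [hφ, TensorProduct.smul_tmul']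
    rw [h1, map_smul, map_smul]
    have h2 : (e.symm.toLinearMap ∘ₗ g).baseChange K (φ v)
        = φ ((e.symm.toLinearMap ∘ₗ g) v) := by simp [hφ]
    rw [h2, key]
  | add x y hx hy => rw [map_add, map_add, hx, hy]
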